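/- For all real parameters θ > 0, u₁ > 0, u₂ > 0, a₂ ≥ 0, a₂₁ ≥ 0, a₃ ≥ 0, a₂₁₁ ≥ 0, a₂₂ ≥ 0, a₃₁ ≥ 0, a₄ ≥ 0 and any reals α, M₂₀, M₁₁, M₀₂, M₃₀, M₂₁, M₁₂, M₀₃, the fourth-moment system (E41)–(E45) has a unique solution (M₄₀, M₃₁, M₂₂, M₁₃, M₀₄) ∈ ℝ⁵; equivalently, the 5×5 coefficient matrix of the system is invertible. -/

import Mathlib

open Matrix in
theorem fourth_moment_system_unique_solution
    (θ u₁ u₂ a₂ a₂₁ a₃ a₂₁₁ a₂₂ a₃₁ a₄ α M₂₀ M₁₁ M₀₂ M₃₀ M₂₁ M₁₂ M₀₃ : ℝ)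
    (hθ : 0 < θ) (hu₁ : 0 < u₁) (hu₂ : 0 < u₂)
    (ha₂ : 0 ≤ a₂) (ha₂₁ : 0 ≤ a₂₁) (ha₃ : 0 ≤ a₃)
    (ha₂₁₁ : 0 ≤ a₂₁₁) (ha₂₂ : 0 ≤ a₂₂) (ha₃₁ : 0 ≤ a₃₁) (ha₄ : 0 ≤ a₄) :
    ∃! M : ℝ × ℝ × ℝ × ℝ × ℝ,
      (4 * u₂ + 6 * a₂₁₁ + 3 * a₂₂ + 4 * a₃₁ + a₄ + 2 * θ) * M.1
          - 4 * u₂ * M.2.1 =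
        (2 * θ * α + 6 * a₂₁₁) * M₃₀ + (3 * a₂₂ + 4 * a₃₁) * M₂₀ + a₄ * α ∧
      -u₁ * M.1 + (a₃ + 3 * a₂₁ + 2 * θ + 3 * u₂ + u₁) * M.2.1
          - 3 * u₂ * M.2.2.1 =
        (3 * a₂₁ + (3 / 2) * θ * α) * M₂₁ + a₃ * M₁₁ + (θ * α / 2) * M₃₀ ∧
      -2 * u₁ * M.2.1 + (2 * a₂ + 2 * θ + 2 * u₂ + 2 * u₁) * M.2.2.1
          - 2 * u₂ * M.2.2.2.1 =
        (θ * α + a₂) * M₁₂ + (θ * α + a₂) * M₂₁ ∧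
      -3 * u₁ * M.2.2.1 + (2 * θ + u₂ + 3 * u₁ + 3 * a₂₁ + a₃) * M.2.2.2.1
          - u₂ * M.2.2.2.2 =
        (θ * α / 2) * M₀₃ + (3 * a₂₁ + (3 / 2) * θ * α) * M₁₂ + a₃ * M₁₁ ∧
      -4 * u₁ * M.2.2.2.1
          + (6 * a₂₁₁ + 3 * a₂₂ + 4 * a₃₁ + a₄ + 2 * θ + 4 * u₁) * M.2.2.2.2 =
        (2 * θ * α + 6 * a₂₁₁) * M₀₃ + (3 * a₂₂ + 4 * a₃₁) * M₀₂ + a₄ * α := by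
  set A : Matrix (Fin 5) (Fin 5) ℝ :=
    !![4 * u₂ + 6 * a₂₁₁ + 3 * a₂₂ + 4 * a₃₁ + a₄ + 2 * θ, -(4 * u₂), 0, 0, 0;
       -u₁, a₃ + 3 * a₂₁ + 2 * θ + 3 * u₂ + u₁, -(3 * u₂), 0, 0;
       0, -(2 * u₁), 2 * a₂ + 2 * θ + 2 * u₂ + 2 * u₁, -(2 * u₂), 0;
       0, 0, -(3 * u₁), 2 * θ + u₂ + 3 * u₁ + 3 * a₂₁ + a₃, -u₂;
       0, 0, 0, -(4 * u₁), 6 * a₂₁₁ + 3 * a₂₂ + 4 * a₃₁ + a₄ + 2 * θ + 4 * u₁]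
    with hA
  set b : Fin 5 → ℝ :=
    ![(2 * θ * α + 6 * a₂₁₁) * M₃₀ + (3 * a₂₂ + 4 * a₃₁) * M₂₀ + a₄ * α,
      (3 * a₂₁ + (3 / 2) * θ * α) * M₂₁ + a₃ * M₁₁ + (θ * α / 2) * M₃₀,
      (θ * α + a₂) * M₁₂ + (θ * α + a₂) * M₂₁,
      (θ * α / 2) * M₀₃ + (3 * a₂₁ + (3 / 2) * θ * α) * M₁₂ + a₃ * M₁₁,
      (2 * θ * α + 6 * a₂₁₁) * M₀₃ + (3 * a₂₂ + 4 * a₃₁) * M₀₂ + a₄ * α] with hb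
  have hdet : A.det ≠ 0 := by
    apply det_ne_zero_of_sum_row_lt_diag
    intro k
    rw [Finset.sum_erase_eq_sub (Finset.mem_univ k)]
    fin_cases k <;>
        simp [hA, Fin.sum_univ_five, Real.norm_eq_abs] <;>
      first
        | (rw [abs_of_pos (by linarith), abs_of_pos (by linarith),
            abs_of_pos (by linarith)]; linarith)
        | (rw [abs_of_pos (by linarith), abs_of_pos (by linarith)]; linarith)
  have hunit : IsUnit A.det := isUnit_iff_ne_zero.2 hdet
  have hmul : ∀ w : Fin 5 → ℝ, A *ᵥ w =
      ![(4 * u₂ + 6 * a₂₁₁ + 3 * a₂₂ + 4 * a₃₁ + a₄ + 2 * θ) * w 0 - 4 * u₂ * w 1,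
        -u₁ * w 0 + (a₃ + 3 * a₂₁ + 2 * θ + 3 * u₂ + u₁) * w 1 - 3 * u₂ * w 2,
        -2 * u₁ * w 1 + (2 * a₂ + 2 * θ + 2 * u₂ + 2 * u₁) * w 2 - 2 * u₂ * w 3,
        -3 * u₁ * w 2 + (2 * θ + u₂ + 3 * u₁ + 3 * a₂₁ + a₃) * w 3 - u₂ * w 4,
        -4 * u₁ * w 3 +
          (6 * a₂₁₁ + 3 * a₂₂ + 4 * a₃₁ + a₄ + 2 * θ + 4 * u₁) * w 4] := by
    intro w
    funext idx
    fin_cases idx <;>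
      simp [hA, Matrix.mulVec, dotProduct, Fin.sum_univ_five] <;> ring
  set x : Fin 5 → ℝ := A⁻¹ *ᵥ b with hx
  have hxv : ![x 0, x 1, x 2, x 3, x 4] = x := by
    funext idx; fin_cases idx <;> rfl
  have hsol : A *ᵥ x = b := by
    rw [hx, Matrix.mulVec_mulVec, Matrix.mul_nonsing_inv A hunit, Matrix.one_mulVec]
  refine ⟨(x 0, x 1, x 2, x 3, x 4), ?_, ?_⟩
  · have h := hsol
    rw [← hxv, hmul] at h
    refine ⟨?_, ?_, ?_, ?_, ?_⟩
    · have := congrFun h 0; simpa [hb] using this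
    · have := congrFun h 1; simpa [hb] using this
    · have := congrFun h 2; simpa [hb] using this
    · have := congrFun h 3; simpa [hb] using this
    · have := congrFun h 4; simpa [hb] using this
  · rintro ⟨m1, m2, m3, m4, m5⟩ ⟨h1, h2, h3, h4, h5⟩
    have hv : A *ᵥ ![m1, m2, m3, m4, m5] = b := by
      rw [hmul]
      funext idx
      fin_cases idx <;> simp [hb] <;> linarith
    have hinj : Function.Injective A.mulVec :=
      Matrix.mulVec_injective_iff_isUnit.2 ((Matrix.isUnit_iff_isUnit_det A).2 hunit)
    have heq : ![m1, m2, m3, m4, m5] = x := hinj (by rw [hv, hsol])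
    have e0 := congrFun heq 0
    have e1 := congrFun heq 1
    have e2 := congrFun heq 2
    have e3 := congrFun heq 3
    have e4 := congrFun heq 4
    simp only [Matrix.cons_val_zero, Matrix.cons_val_one, Matrix.head_cons,
      Matrix.cons_val_succ, Matrix.cons_val] at e0 e1 e2 e3 e4
    simp_all
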